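/- For a finite nonempty subset A of a commutative group Z and n ≥ 1, equality holds in Plünnecke's inequality |nA| ≤ σ(A)ⁿ·|A| for some n ≥ 2 if and only if A is a coset of a finite subgroup of Z. -/

import Mathlib

open Pointwise Finset

private lemma add_aux' {Z : Type*} [AddCommGroup Z] [DecidableEq Z] {A B C : Finset Z}
    (hA : A.Nonempty) (hAB : A ⊆ B)
    (h : ∀ A' ∈ B.powerset.erase ∅, ((A + C).card : ℚ≥0) / A.card ≤ (A' + C).card / A'.card) :
    ∀ A' ⊆ A, (A + C).card * A'.card ≤ (A' + C).card * A.card := by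
  rintro A' hAA'
  obtain rfl | hA' := A'.eq_empty_or_nonempty
  · simp
  have hA₀ : (0 : ℚ≥0) < A.card := by exact_mod_cast hA.card_pos
  have hA₀' : (0 : ℚ≥0) < A'.card := by exact_mod_cast hA'.card_pos
  exact mod_cast
    (div_le_div_iff₀ hA₀ hA₀').1
      (h _ <| mem_erase_of_ne_of_mem hA'.ne_empty <| mem_powerset.2 <| hAA'.trans hAB)

private lemma petridis_add {Z : Type*} [AddCommGroup Z] [DecidableEq Z] {A B : Finset Z}
    (hAB : ∀ A' ⊆ A, (A + B).card * A'.card ≤ (A' + B).card * A.card) (n : ℕ) :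
    ((A + n • B).card : ℚ≥0) ≤ ((A + B).card / A.card : ℚ≥0) ^ n * A.card := by
  obtain rfl | hA := A.eq_empty_or_nonempty
  · simp
  induction' n with n ih
  · simp
  refine le_of_mul_le_mul_right ?_ (by positivity : (0 : ℚ≥0) < A.card)
  calc
    (((A + (n + 1) • B).card) * A.card : ℚ≥0)
      = (A + B + n • B).card * A.card := by rw [succ_nsmul', ← add_assoc]
    _ ≤ (A + B).card * (A + n • B).card := by
        have h := pluennecke_petridis_inequality_add (n • B) hAB
        rw [add_comm (n • B) A, add_right_comm A (n • B) B] at h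
        exact_mod_cast h
    _ ≤ (A + B).card * (((A + B).card / A.card) ^ n * A.card) := by gcongr
    _ = ((A + B).card / A.card) ^ (n + 1) * A.card * A.card := by
        have hA0 : (A.card : ℚ≥0) ≠ 0 := Nat.cast_ne_zero.2 hA.card_pos.ne'
        field_simp
        rw [pow_succ, mul_comm (A.card : ℚ≥0), mul_assoc, div_mul_cancel₀ _ hA0, mul_comm]

theorem stmt_13 {Z : Type*} [AddCommGroup Z] [DecidableEq Z] (A : Finset Z)
    (hA : A.Nonempty) :
    (∃ n, 2 ≤ n ∧ (n • A).card * A.card ^ (n - 1) = (A + A).card ^ n) ↔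
      ∃ (H : AddSubgroup Z) (z : Z), (H : Set Z).Finite ∧ (A : Set Z) = z +ᵥ (H : Set Z) := by
  obtain ⟨a, ha⟩ := hA
  have hAne : A.Nonempty := ⟨a, ha⟩
  constructor
  · rintro ⟨n, hn2, hn⟩
    -- Step 1: show (A + A).card = A.card
    have hA₀ : (0 : ℚ≥0) < A.card := by exact_mod_cast hAne.card_pos
    set K : ℚ≥0 := (A + A).card / A.card with hK
    have hpow : (A.card : ℚ≥0) ^ n = (A.card : ℚ≥0) ^ (n - 1) * A.card := by
      rw [← pow_succ]; congr 1; omega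
    have hq : ((n • A).card : ℚ≥0) = K ^ n * A.card := by
      rw [hK, div_pow, div_mul_eq_mul_div, eq_div_iff (by positivity), hpow, ← mul_assoc]
      exact_mod_cast congrArg (fun m : ℕ => (m : ℚ≥0) * A.card) hn
    have hA' : A ∈ A.powerset.erase ∅ := mem_erase_of_ne_of_mem hAne.ne_empty (mem_powerset_self _)
    obtain ⟨C, hC, hCmin⟩ :=
      exists_min_image (A.powerset.erase ∅) (fun C ↦ ((C + A).card / C.card : ℚ≥0)) ⟨A, hA'⟩
    rw [mem_erase, mem_powerset, ← nonempty_iff_ne_empty] at hC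
    obtain ⟨hCne, hCA⟩ := hC
    have chain : K ^ n * A.card ≤ K ^ n * C.card := by
      calc K ^ n * (A.card : ℚ≥0) = (n • A).card := hq.symm
        _ ≤ ((C + n • A).card : ℚ≥0) := by exact_mod_cast card_le_card_add_left hCne
        _ ≤ ((C + A).card / C.card) ^ n * C.card :=
            petridis_add (add_aux' hCne hCA hCmin) n
        _ ≤ K ^ n * C.card := by gcongr; exact hCmin A hA'
    have hKpos : (0 : ℚ≥0) < K ^ n := by
      apply pow_pos
      apply div_pos _ hA₀
      exact_mod_cast (hAne.add hAne).card_pos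
    have hCcard : A.card ≤ C.card := by
      have h : (A.card : ℚ≥0) ≤ C.card := le_of_mul_le_mul_left chain hKpos
      exact_mod_cast h
    have hCeq : C = A := eq_of_subset_of_card_le hCA hCcard
    rw [hCeq] at hCmin
    have hAB := add_aux' hAne (Finset.Subset.refl A) hCmin
    have h5 : ((A + (n - 1) • A).card : ℚ≥0) ≤ K ^ (n - 1) * A.card := petridis_add hAB (n - 1)
    have hsm : A + (n - 1) • A = n • A := by
      rw [← succ_nsmul']
      congr 1
      omega
    rw [hsm, hq] at h5
    have hKle : K ≤ 1 := by
      have h6 : K ^ n ≤ K ^ (n - 1) := le_of_mul_le_mul_right h5 hA₀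
      refine not_lt.1 fun hK1 => absurd h6 (not_le.2 ?_)
      exact pow_lt_pow_right₀ hK1 (by omega)
    have hcard : (A + A).card = A.card := by
      have h7 : ((A + A).card : ℚ≥0) ≤ A.card := by
        rw [hK] at hKle
        calc ((A + A).card : ℚ≥0) = (A + A).card / A.card * A.card := by field_simp
          _ ≤ 1 * A.card := by gcongr
          _ = A.card := one_mul _
      exact le_antisymm (by exact_mod_cast h7) (card_le_card_add_left hAne)
    -- Step 2: build the subgroup
    have hsing : {a} + A = A + A :=
      eq_of_subset_of_card_le (add_subset_add_right (singleton_subset_iff.2 ha))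
        (by rw [card_singleton_add, hcard])
    have hstab : ∀ b ∈ A, ∀ x ∈ A, b - a + x ∈ A := by
      intro b hb x hx
      have hmem : b + x ∈ {a} + A := hsing ▸ add_mem_add hb hx
      rw [singleton_add, mem_vadd_finset] at hmem
      obtain ⟨y, hy, hxy⟩ := hmem
      rw [vadd_eq_add] at hxy
      have hy2 : y = b + x - a := by rw [← hxy]; abel
      have heq : b - a + x = y := by rw [hy2]; abel
      rwa [heq]
    have hvadd : ∀ b ∈ A, (b - a) +ᵥ A = A := by
      intro b hb
      apply eq_of_subset_of_card_le
      · intro x hx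
        rw [mem_vadd_finset] at hx
        obtain ⟨y, hy, rfl⟩ := hx
        rw [vadd_eq_add]
        exact hstab b hb y hy
      · rw [card_vadd_finset]
    refine ⟨AddAction.stabilizer Z A, a, ?_, ?_⟩
    · apply Set.Finite.subset (((-a) +ᵥ A : Finset Z)).finite_toSet
      intro g hg
      have hg' : g +ᵥ A = A := hg
      have hga : g + a ∈ A := by
        rw [← hg', mem_vadd_finset]
        exact ⟨a, ha, rfl⟩
      rw [Finset.coe_vadd_finset, Set.mem_vadd_set]
      exact ⟨g + a, hga, by simp only [vadd_eq_add]; abel⟩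
    · ext x
      simp only [Finset.mem_coe, Set.mem_vadd_set]
      constructor
      · intro hx
        refine ⟨x - a, ?_, by simp only [vadd_eq_add]; abel⟩
        exact hvadd x hx
      · rintro ⟨h, hh, rfl⟩
        have hh' : h +ᵥ A = A := hh
        rw [← hh', mem_vadd_finset]
        exact ⟨a, ha, by simp only [vadd_eq_add]; abel⟩
  · rintro ⟨H, z, hHfin, hAz⟩
    refine ⟨2, le_refl 2, ?_⟩
    have hmem : ∀ x, x ∈ A ↔ -z + x ∈ H := by
      intro x
      rw [← Finset.mem_coe, hAz, Set.mem_vadd_set_iff_neg_vadd_mem]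
      rfl
    have hAA : A + A = a +ᵥ A := by
      apply Finset.Subset.antisymm
      · intro x hx
        rw [Finset.mem_add] at hx
        obtain ⟨b, hb, c, hc, rfl⟩ := hx
        rw [mem_vadd_finset]
        refine ⟨b + c - a, ?_, by simp only [vadd_eq_add]; abel⟩
        rw [hmem]
        have h1 : -z + b ∈ H := (hmem b).1 hb
        have h2 : -z + c ∈ H := (hmem c).1 hc
        have h3 : -z + a ∈ H := (hmem a).1 ha
        have : -z + (b + c - a) = (-z + b) + (-z + c) - (-z + a) := by abel
        rw [this]
        exact sub_mem (add_mem h1 h2) h3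
      · intro x hx
        rw [mem_vadd_finset] at hx
        obtain ⟨y, hy, rfl⟩ := hx
        rw [vadd_eq_add]
        exact add_mem_add ha hy
    have hcard : (A + A).card = A.card := by rw [hAA, card_vadd_finset]
    rw [two_nsmul, hcard]
    ring
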